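/- Let k and d be positive integers with k ≤ d < 2k-1, and let A be a d-dimensional affine subspace of 𝔽₂^{2k}. Then |A ∩ R_k| ≤ 2^{d-1} + 2^{k-1} and |A ∩ S_k| ≤ 2^{d-1} + 2^{k-2}. -/

import Mathlib

/-- The quadratic form `q_k(x) = ∑_{i=1}^k x_i · x_{k+i}` on `𝔽₂^{2k}`. -/
def qForm (k : ℕ) (x : Fin (2 * k) → ZMod 2) : ZMod 2 :=
  ∑ i : Fin k, x ⟨i.1, by have := i.2; omega⟩ * x ⟨k + i.1, by have := i.2; omega⟩

/-- `S_k = {x ∈ 𝔽₂^{2k} : q_k(x) = 1}`. -/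
def Sset (k : ℕ) : Set (Fin (2 * k) → ZMod 2) := {x | qForm k x = 1}

/-- `R_k = {x ∈ 𝔽₂^{2k} : q_k(x) = 0}`. -/
def Rset (k : ℕ) : Set (Fin (2 * k) → ZMod 2) := {x | qForm k x = 0}

/-- `A` is an affine subspace of dimension `d`: a translate `a + W` of a linear
subspace `W` with `dim W = d`. -/
def IsAffineOfDim {V : Type*} [AddCommGroup V] [Module (ZMod 2) V]
    (A : Set V) (d : ℕ) : Prop :=
  ∃ (a : V) (W : Submodule (ZMod 2) V),
    Module.finrank (ZMod 2) W = d ∧ A = (a + ·) '' (W : Set V)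

/-- lower index -/
def lo {k : ℕ} (i : Fin k) : Fin (2 * k) := ⟨i.1, by have := i.2; omega⟩
/-- upper index -/
def hi {k : ℕ} (i : Fin k) : Fin (2 * k) := ⟨k + i.1, by have := i.2; omega⟩

lemma qForm_eq (k : ℕ) (x : Fin (2 * k) → ZMod 2) :
    qForm k x = ∑ i : Fin k, x (lo i) * x (hi i) := rfl

/-- the sign character on ZMod 2, valued in ℤ -/
def chi (a : ZMod 2) : ℤ := if a = 0 then 1 else -1

lemma chi_add (a b : ZMod 2) : chi (a + b) = chi a * chi b := by revert a b; decide

lemma chi_le_one (a : ZMod 2) : chi a ≤ 1 := by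
  unfold chi; split <;> omega

lemma chi_zero : chi 0 = 1 := rfl
lemma chi_one : chi 1 = -1 := rfl

/-- the polar bilinear form of qForm -/
noncomputable def bForm (k : ℕ) : LinearMap.BilinForm (ZMod 2) (Fin (2 * k) → ZMod 2) :=
  LinearMap.mk₂ (ZMod 2)
    (fun x y => ∑ i : Fin k, (x (lo i) * y (hi i) + x (hi i) * y (lo i)))
    (by intro x x' y; rw [← Finset.sum_add_distrib]; apply Finset.sum_congr rfl; intros; simp; ring)
    (by intro c x y; simp only [Pi.smul_apply, smul_eq_mul]; rw [Finset.mul_sum]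
        apply Finset.sum_congr rfl; intros; ring)
    (by intro x y y'; rw [← Finset.sum_add_distrib]; apply Finset.sum_congr rfl; intros; simp; ring)
    (by intro c x y; simp only [Pi.smul_apply, smul_eq_mul]; rw [Finset.mul_sum]
        apply Finset.sum_congr rfl; intros; ring)

lemma bForm_apply (k : ℕ) (x y : Fin (2 * k) → ZMod 2) :
    bForm k x y = ∑ i : Fin k, (x (lo i) * y (hi i) + x (hi i) * y (lo i)) := rfl

lemma bForm_symm (k : ℕ) (x y : Fin (2 * k) → ZMod 2) : bForm k x y = bForm k y x := by
  rw [bForm_apply, bForm_apply]; apply Finset.sum_congr rfl; intros; ring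

lemma bForm_isRefl (k : ℕ) : (bForm k).IsRefl := by
  intro x y h; rw [bForm_symm]; exact h

/-- polar identity -/
lemma qForm_add (k : ℕ) (x y : Fin (2 * k) → ZMod 2) :
    qForm k (x + y) = qForm k x + qForm k y + bForm k x y := by
  rw [qForm_eq, qForm_eq, qForm_eq, bForm_apply, ← Finset.sum_add_distrib,
    ← Finset.sum_add_distrib]
  apply Finset.sum_congr rfl; intro i _
  simp only [Pi.add_apply]
  ring

lemma qForm_zero (k : ℕ) : qForm k 0 = 0 := by
  rw [qForm_eq]; simp

lemma lo_ne_hi {k : ℕ} (i j : Fin k) : lo i ≠ hi j := by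
  simp only [lo, hi, ne_eq, Fin.mk.injEq]; omega

lemma hi_inj {k : ℕ} : Function.Injective (hi (k := k)) := by
  intro i j h; simp only [hi, Fin.mk.injEq] at h; exact Fin.ext (by omega)

lemma lo_inj {k : ℕ} : Function.Injective (lo (k := k)) := by
  intro i j h; simp only [lo, Fin.mk.injEq] at h; exact Fin.ext h

lemma bForm_single_hi (k : ℕ) (x : Fin (2 * k) → ZMod 2) (i : Fin k) :
    bForm k x (Pi.single (hi i) 1) = x (lo i) := by
  rw [bForm_apply]
  rw [Finset.sum_eq_single i]
  · simp [Pi.single_apply, (lo_ne_hi i i).symm]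
  · intro j _ hj
    have h1 : hi i ≠ hi j := fun h => hj (hi_inj h).symm
    simp [Pi.single_apply, h1.symm, (lo_ne_hi j i).symm]
  · simp

lemma bForm_single_lo (k : ℕ) (x : Fin (2 * k) → ZMod 2) (i : Fin k) :
    bForm k x (Pi.single (lo i) 1) = x (hi i) := by
  rw [bForm_apply]
  rw [Finset.sum_eq_single i]
  · simp [Pi.single_apply, lo_ne_hi i i]
  · intro j _ hj
    have h1 : lo i ≠ lo j := fun h => hj (lo_inj h).symm
    simp [Pi.single_apply, h1.symm, lo_ne_hi j i, (lo_ne_hi i j).symm]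
  · simp

lemma bForm_nondeg (k : ℕ) : (bForm k).Nondegenerate := by
  have hL : ∀ x, (∀ y, bForm k x y = 0) → x = 0 := by
    intro x hx
    funext j
    rw [Pi.zero_apply]
    rcases lt_or_ge j.1 k with h | h
    · have := hx (Pi.single (hi ⟨j.1, h⟩) 1)
      rw [bForm_single_hi] at this
      convert this using 2
      exact Fin.ext rfl
    · have hj : j.1 - k < k := by have := j.2; omega
      have := hx (Pi.single (lo ⟨j.1 - k, hj⟩) 1)
      rw [bForm_single_lo] at this
      convert this using 2
      simp only [hi]
      exact Fin.ext (by simp; omega)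
  exact ⟨hL, fun y hy => hL y (fun x => by rw [bForm_symm]; exact hy x)⟩

section Char
variable {G : Type*} [AddCommGroup G] [Fintype G]

lemma zmod2_cases (a : ZMod 2) : a = 0 ∨ a = 1 := by revert a; decide

lemma sum_chi_eq_zero (f : G → ZMod 2) (hf : ∀ x y, f (x + y) = f x + f y)
    (x0 : G) (h0 : f x0 = 1) : ∑ x : G, chi (f x) = 0 := by
  have hbij : Function.Bijective (fun x : G => x + x0) :=
    (Equiv.addRight x0).bijective
  have h1 : ∑ x : G, chi (f (x + x0)) = ∑ x : G, chi (f x) :=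
    Fintype.sum_bijective _ hbij _ _ (fun x => rfl)
  have h2 : ∀ x : G, chi (f (x + x0)) = - chi (f x) := by
    intro x
    rw [hf, h0, chi_add, chi_one]; ring
  rw [Finset.sum_congr rfl (fun x _ => h2 x), Finset.sum_neg_distrib] at h1
  omega

lemma sum_chi_nonneg (f : G → ZMod 2) (hf : ∀ x y, f (x + y) = f x + f y) :
    0 ≤ ∑ x : G, chi (f x) := by
  by_cases h : ∃ x0, f x0 = 1
  · obtain ⟨x0, h0⟩ := h
    rw [sum_chi_eq_zero f hf x0 h0]
  · push_neg at h
    have : ∀ x, f x = 0 := fun x => (zmod2_cases (f x)).resolve_right (h x)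
    simp only [this, chi_zero]
    positivity

lemma sum_chi_all_zero (f : G → ZMod 2) (h : ∀ x, f x = 0) :
    ∑ x : G, chi (f x) = Fintype.card G := by
  simp [h, chi_zero]

end Char

/-- dot-product character sum on `𝔽₂^k` -/
lemma dot_char_sum (k : ℕ) (u : Fin k → ZMod 2) :
    ∑ v : Fin k → ZMod 2, chi (∑ i, u i * v i) =
      if u = 0 then (2 : ℤ) ^ k else 0 := by
  split_ifs with hu
  · subst hu
    rw [sum_chi_all_zero _ (by intro v; simp)]
    simp [ZMod.card]
  · have : ∃ i, u i ≠ 0 := by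
      by_contra h; push_neg at h; exact hu (funext h)
    obtain ⟨i, hi⟩ := this
    have hui : u i = 1 := (zmod2_cases (u i)).resolve_left hi
    refine sum_chi_eq_zero _ ?_ (Pi.single i 1) ?_
    · intro x y
      rw [← Finset.sum_add_distrib]
      apply Finset.sum_congr rfl; intros; simp [mul_add]
    · rw [Finset.sum_eq_single i]
      · simp [hui]
      · intro j _ hj; simp [Pi.single_apply, hj]
      · simp

def glue {k : ℕ} (u v : Fin k → ZMod 2) : Fin (2 * k) → ZMod 2 :=
  fun j => if h : j.1 < k then u ⟨j.1, h⟩ else v ⟨j.1 - k, by have := j.2; omega⟩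


lemma glue_lo {k : ℕ} (u v : Fin k → ZMod 2) (i : Fin k) : glue u v (lo i) = u i := by
  simp [glue, lo]

lemma glue_hi {k : ℕ} (u v : Fin k → ZMod 2) (i : Fin k) : glue u v (hi i) = v i := by
  have h : ¬ (k + i.1 < k) := by omega
  simp only [glue, hi, h, dif_neg, not_false_iff]
  congr 1
  exact Fin.ext (by simp)

lemma glue_bijective {k : ℕ} :
    Function.Bijective (fun p : (Fin k → ZMod 2) × (Fin k → ZMod 2) => glue p.1 p.2) := by
  rw [Function.bijective_iff_has_inverse]
  refine ⟨fun x => (fun i => x (lo i), fun i => x (hi i)), ?_, ?_⟩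
  · rintro ⟨u, v⟩
    simp only [Prod.mk.injEq]
    constructor
    · funext i; exact glue_lo u v i
    · funext i; exact glue_hi u v i
  · intro x
    funext j
    simp only [glue]
    split_ifs with h
    · congr 1
    · congr 1; simp only [hi]; exact Fin.ext (by simp; omega)

lemma qForm_glue {k : ℕ} (u v : Fin k → ZMod 2) :
    qForm k (glue u v) = ∑ i, u i * v i := by
  rw [qForm_eq]
  apply Finset.sum_congr rfl
  intro i _
  rw [glue_lo, glue_hi]

/-- the full Gauss sum -/
lemma gauss_full (k : ℕ) : ∑ x : Fin (2 * k) → ZMod 2, chi (qForm k x) = 2 ^ k := by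
  have := Fintype.sum_bijective _ (glue_bijective (k := k))
    (fun p : (Fin k → ZMod 2) × (Fin k → ZMod 2) => chi (qForm k (glue p.1 p.2)))
    (fun x => chi (qForm k x)) (fun p => rfl)
  rw [← this]
  rw [Fintype.sum_prod_type]
  have : ∀ u : Fin k → ZMod 2, ∑ v : Fin k → ZMod 2, chi (qForm k (glue u v))
      = if u = 0 then (2:ℤ) ^ k else 0 := by
    intro u
    rw [← dot_char_sum k u]
    apply Finset.sum_congr rfl
    intro v _
    rw [qForm_glue]
  rw [Finset.sum_congr rfl (fun u _ => this u)]
  simp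

lemma gauss_shift_zero (k : ℕ) (c : Fin (2 * k) → ZMod 2) :
    ∑ x : Fin (2 * k) → ZMod 2, chi (qForm k (x + c)) = 2 ^ k := by
  rw [← gauss_full k]
  exact Fintype.sum_bijective _ (Equiv.addRight c).bijective _ _ (fun x => rfl)

/-- the twisted Gauss sum -/
lemma gauss_twist (k : ℕ) (ξ : Fin (2 * k) → ZMod 2) :
    ∑ x : Fin (2 * k) → ZMod 2, chi (qForm k x + bForm k ξ x) =
      2 ^ k * chi (qForm k ξ) := by
  have key : ∀ x, qForm k x + bForm k ξ x = qForm k (x + ξ) + qForm k ξ := by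
    intro x
    rw [qForm_add, bForm_symm]
    generalize qForm k x = A
    generalize qForm k ξ = B
    generalize bForm k x ξ = C
    revert A B C; decide
  calc ∑ x : Fin (2 * k) → ZMod 2, chi (qForm k x + bForm k ξ x)
      = ∑ x : Fin (2 * k) → ZMod 2, chi (qForm k (x + ξ)) * chi (qForm k ξ) := by
        apply Finset.sum_congr rfl; intro x _; rw [key, chi_add]
    _ = (∑ x : Fin (2 * k) → ZMod 2, chi (qForm k (x + ξ))) * chi (qForm k ξ) := by
        rw [Finset.sum_mul]
    _ = 2 ^ k * chi (qForm k ξ) := by rw [gauss_shift_zero]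

open LinearMap (BilinForm)

open scoped Classical

noncomputable instance (priority := low) {α : Type*} [Finite α] : Fintype α :=
  Fintype.ofFinite α


lemma subspace_char_sum (k : ℕ) (W : Submodule (ZMod 2) (Fin (2 * k) → ZMod 2))
    (y : Fin (2 * k) → ZMod 2) :
    ∑ ξ : (bForm k).orthogonal W, chi (bForm k ξ.1 y) =
      if y ∈ W then (Fintype.card ((bForm k).orthogonal W) : ℤ) else 0 := by
  have hadd : ∀ x y' : (bForm k).orthogonal W,
      bForm k (x + y' : _).1 y = bForm k x.1 y + bForm k y'.1 y := by
    intro x y'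
    simp [map_add, LinearMap.add_apply]
  split_ifs with hy
  · rw [← sum_chi_all_zero (fun ξ : (bForm k).orthogonal W => bForm k ξ.1 y)]
    intro ξ
    have := ξ.2
    rw [LinearMap.BilinForm.mem_orthogonal_iff] at this
    have h0 := this y hy
    rw [bForm_symm]
    exact h0
  · have hy' : y ∉ (bForm k).orthogonal ((bForm k).orthogonal W) := by
      rw [LinearMap.BilinForm.orthogonal_orthogonal (bForm_nondeg k) (bForm_isRefl k)]
      exact hy
    rw [LinearMap.BilinForm.mem_orthogonal_iff] at hy'
    push_neg at hy'
    obtain ⟨ξ, hξU, hbne⟩ := hy'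
    have hb1 : bForm k ξ y = 1 := (zmod2_cases _).resolve_left hbne
    exact sum_chi_eq_zero (fun ξ : (bForm k).orthogonal W => bForm k ξ.1 y) hadd ⟨ξ, hξU⟩ hb1

lemma key_bounds (k d : ℕ) (hk2 : 2 ≤ k) (hkd : k ≤ d) (hd2 : d ≤ 2 * k - 2)
    (a : Fin (2 * k) → ZMod 2) (W : Submodule (ZMod 2) (Fin (2 * k) → ZMod 2))
    (hW : Module.finrank (ZMod 2) (↥W) = d) :
    -((2:ℤ) ^ (k - 1)) ≤ (∑ x : Fin (2 * k) → ZMod 2,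
        if a + x ∈ W then chi (qForm k x) else 0) ∧
      (∑ x : Fin (2 * k) → ZMod 2, if a + x ∈ W then chi (qForm k x) else 0) ≤ 2 ^ k := by
  set U := (bForm k).orthogonal W with hUdef
  have hV : Module.finrank (ZMod 2) (Fin (2 * k) → ZMod 2) = 2 * k := by
    simp [Module.finrank_pi]
  have hUr : Module.finrank (ZMod 2) U = 2 * k - d := by
    rw [hUdef, LinearMap.BilinForm.finrank_orthogonal (bForm_nondeg k) W,
      hV, hW]
  have hcardU : (Fintype.card U : ℤ) = 2 ^ (2 * k - d) := by
    have := Module.card_eq_pow_finrank (K := ZMod 2) (V := U)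
    rw [ZMod.card, hUr] at this
    exact_mod_cast this
  set g : U → ZMod 2 := fun ξ => qForm k ξ.1 + bForm k a ξ.1 with hgdef
  set T : ℤ := ∑ ξ : U, chi (g ξ) with hTdef
  have hg : ∀ ξ η : U, g (ξ + η) = g ξ + g η + bForm k ξ.1 η.1 := by
    intro ξ η
    show qForm k (ξ.1 + η.1) + bForm k a (ξ.1 + η.1) = _
    rw [qForm_add, map_add]
    ring
  -- upper bound on T
  have hTle : T ≤ 2 ^ (2 * k - d) := by
    calc T ≤ ∑ _ξ : U, (1:ℤ) := Finset.sum_le_sum (fun ξ _ => chi_le_one _)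
    _ = (Fintype.card U : ℤ) := by simp
    _ = 2 ^ (2 * k - d) := hcardU
  -- lower bound on T
  have hTge : -(2 ^ (2 * k - d - 1)) ≤ T := by
    by_cases hcase : ∀ ξ η : U, bForm k ξ.1 η.1 = 0
    · have h0 : (0:ℤ) ≤ T :=
        sum_chi_nonneg g (fun x y => by rw [hg, hcase]; ring)
      have : (0:ℤ) < 2 ^ (2 * k - d - 1) := by positivity
      linarith
    · push_neg at hcase
      obtain ⟨ξ0, η0, hb⟩ := hcase
      have hb1 : bForm k ξ0.1 η0.1 = 1 := (zmod2_cases _).resolve_left hb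
      have shift : ∀ c : U, ∑ ξ : U, chi (g (ξ + c)) = T := by
        intro c
        exact Fintype.sum_bijective (· + c) (Equiv.addRight c).bijective _ _ (fun ξ => rfl)
      have h4 : ∑ ξ : U, (chi (g ξ) + chi (g (ξ + ξ0)) + chi (g (ξ + η0)) +
          chi (g (ξ + (ξ0 + η0)))) = 4 * T := by
        rw [Finset.sum_add_distrib, Finset.sum_add_distrib, Finset.sum_add_distrib,
          shift ξ0, shift η0, shift (ξ0 + η0)]
        simp only [← hTdef]
        ring
      have hpt : ∀ ξ : U, -2 ≤ chi (g ξ) + chi (g (ξ + ξ0)) + chi (g (ξ + η0)) +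
          chi (g (ξ + (ξ0 + η0))) := by
        intro ξ
        have hexp : bForm k ξ.1 ((ξ0 + η0 : U)).1 = bForm k ξ.1 ξ0.1 + bForm k ξ.1 η0.1 := by
          simp [map_add]
        rw [hg ξ ξ0, hg ξ η0, hg ξ (ξ0 + η0), hg ξ0 η0, hexp, hb1]
        generalize g ξ = u
        generalize g ξ0 = p
        generalize g η0 = q'
        generalize bForm k ξ.1 ξ0.1 = r
        generalize bForm k ξ.1 η0.1 = s
        revert u p q' r s; decide
      have hsum : ∑ _ξ : U, (-2 : ℤ) ≤ 4 * T := by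
        rw [← h4]
        exact Finset.sum_le_sum (fun ξ _ => hpt ξ)
      have hcs : ∑ _ξ : U, (-2 : ℤ) = -(2 * 2 ^ (2 * k - d)) := by
        rw [Finset.sum_const, Finset.card_univ, nsmul_eq_mul]
        rw [show ((Fintype.card U : ℤ)) * (-2) = -(2 * (Fintype.card U : ℤ)) by ring, hcardU]
      have hpow : (2:ℤ) ^ (2 * k - d) = 2 * 2 ^ (2 * k - d - 1) := by
        rw [← pow_succ']
        congr 1
        omega
      rw [hcs, hpow] at hsum
      linarith
  -- the Fourier identity
  set S : ℤ := ∑ x : Fin (2 * k) → ZMod 2, if a + x ∈ W then chi (qForm k x) else 0 with hSdef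
  have fourier : (2:ℤ) ^ (2 * k - d) * S = 2 ^ k * T := by
    have step1 : ∀ x, (if a + x ∈ W then chi (qForm k x) else 0) * 2 ^ (2 * k - d) =
        chi (qForm k x) * ∑ ξ : U, chi (bForm k ξ.1 (a + x)) := by
      intro x
      rw [subspace_char_sum k W (a + x)]
      split_ifs with h
      · rw [hcardU]
      · ring
    calc (2:ℤ) ^ (2 * k - d) * S
        = ∑ x : Fin (2 * k) → ZMod 2,
            (if a + x ∈ W then chi (qForm k x) else 0) * 2 ^ (2 * k - d) := by
          rw [mul_comm, hSdef, Finset.sum_mul]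
      _ = ∑ x : Fin (2 * k) → ZMod 2, chi (qForm k x) * ∑ ξ : U, chi (bForm k ξ.1 (a + x)) :=
          Finset.sum_congr rfl (fun x _ => step1 x)
      _ = ∑ x : Fin (2 * k) → ZMod 2, ∑ ξ : U,
            chi (qForm k x + bForm k ξ.1 x) * chi (bForm k ξ.1 a) := by
          apply Finset.sum_congr rfl
          intro x _
          rw [Finset.mul_sum]
          apply Finset.sum_congr rfl
          intro ξ _
          rw [map_add, chi_add, chi_add]
          ring
      _ = ∑ ξ : U, (∑ x : Fin (2 * k) → ZMod 2, chi (qForm k x + bForm k ξ.1 x)) *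
            chi (bForm k ξ.1 a) := by
          rw [Finset.sum_comm]
          apply Finset.sum_congr rfl
          intro ξ _
          rw [Finset.sum_mul]
      _ = ∑ ξ : U, (2 ^ k * chi (qForm k ξ.1)) * chi (bForm k ξ.1 a) := by
          apply Finset.sum_congr rfl
          intro ξ _
          rw [gauss_twist]
      _ = 2 ^ k * T := by
          rw [hTdef, Finset.mul_sum]
          apply Finset.sum_congr rfl
          intro ξ _
          rw [hgdef]
          simp only []
          rw [chi_add, bForm_symm k a ξ.1]
          ring
  constructor
  · -- lower bound on S
    have h1 : (2:ℤ) ^ k * (-(2 ^ (2 * k - d - 1))) ≤ 2 ^ k * T := by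
      apply mul_le_mul_of_nonneg_left hTge (by positivity)
    have h2 : (2:ℤ) ^ k * (-(2 ^ (2 * k - d - 1))) = 2 ^ (2 * k - d) * (-(2 ^ (k - 1))) := by
      rw [mul_neg, mul_neg, ← pow_add, ← pow_add]
      congr 2
      omega
    rw [h2, ← fourier] at h1
    exact le_of_mul_le_mul_left h1 (by positivity)
  · -- upper bound on S
    have h1 : (2:ℤ) ^ k * T ≤ 2 ^ k * 2 ^ (2 * k - d) := by
      apply mul_le_mul_of_nonneg_left hTle (by positivity)
    have h2 : (2:ℤ) ^ k * 2 ^ (2 * k - d) = 2 ^ (2 * k - d) * 2 ^ k := by ring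
    rw [h2, ← fourier] at h1
    exact le_of_mul_le_mul_left h1 (by positivity)

lemma zmod2_ne_zero (a : ZMod 2) : a ≠ 0 ↔ a = 1 := by revert a; decide

theorem stmt_3 (k d : ℕ) (hk : 0 < k) (hd : 0 < d)
    (hkd : k ≤ d) (hd2 : d < 2 * k - 1)
    (A : Set (Fin (2 * k) → ZMod 2)) (hA : IsAffineOfDim A d) :
    ((A ∩ Rset k).ncard : ℝ) ≤ 2 ^ ((d : ℤ) - 1) + 2 ^ ((k : ℤ) - 1) ∧
    ((A ∩ Sset k).ncard : ℝ) ≤ 2 ^ ((d : ℤ) - 1) + 2 ^ ((k : ℤ) - 2) := by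
  classical
  obtain ⟨a, W, hW, hAW⟩ := hA
  have hk2 : 2 ≤ k := by omega
  have hd2' : d ≤ 2 * k - 2 := by omega
  have hself : ∀ v : Fin (2 * k) → ZMod 2, v + v = 0 := by
    intro v; funext j
    simp only [Pi.add_apply, Pi.zero_apply]
    generalize v j = t; revert t; decide
  have hmem : ∀ x, x ∈ A ↔ a + x ∈ W := by
    intro x
    rw [hAW]
    constructor
    · rintro ⟨w, hw, rfl⟩
      have : a + (a + w) = w := by rw [← add_assoc, hself, zero_add]
      rw [this]; exact hw
    · intro h
      exact ⟨a + x, h, by show a + (a + x) = x; rw [← add_assoc, hself, zero_add]⟩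
  set FA : Finset (Fin (2 * k) → ZMod 2) := Finset.univ.filter (· ∈ A) with hFAdef
  set F0 : Finset (Fin (2 * k) → ZMod 2) := FA.filter (fun x => qForm k x = 0) with hF0def
  set F1 : Finset (Fin (2 * k) → ZMod 2) := FA.filter (fun x => ¬ qForm k x = 0) with hF1def
  -- identify the set cardinalities
  have hR : (A ∩ Rset k).ncard = F0.card := by
    have : A ∩ Rset k = ↑F0 := by
      ext x
      simp [hF0def, hFAdef, Rset, Set.mem_inter_iff]
    rw [this, Set.ncard_coe_finset]
  have hS : (A ∩ Sset k).ncard = F1.card := by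
    have : A ∩ Sset k = ↑F1 := by
      ext x
      simp only [hF1def, hFAdef, Sset, Set.mem_inter_iff, Finset.coe_filter,
        Finset.mem_filter, Finset.mem_univ, true_and, Set.mem_setOf_eq]
      exact and_congr_right (fun _ => (zmod2_ne_zero (qForm k x)).symm)
    rw [this, Set.ncard_coe_finset]
  have hcard01 : F0.card + F1.card = FA.card :=
    Finset.card_filter_add_card_filter_not _
  have hFA : FA.card = 2 ^ d := by
    have h1 : (FA : Set (Fin (2 * k) → ZMod 2)) = A := by
      ext x; simp [hFAdef]
    have h2 : A.ncard = FA.card := by rw [← Set.ncard_coe_finset, h1]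
    rw [← h2, hAW, Set.ncard_image_of_injective _ (add_right_injective a)]
    rw [← Nat.card_coe_set_eq, Nat.card_eq_fintype_card]
    have := Module.card_eq_pow_finrank (K := ZMod 2) (V := ↥W)
    rw [ZMod.card, hW] at this
    exact this
  -- Gauss sum = N0 - N1
  have hsum : ∑ x : Fin (2 * k) → ZMod 2, (if a + x ∈ W then chi (qForm k x) else 0)
      = (F0.card : ℤ) - F1.card := by
    calc ∑ x : Fin (2 * k) → ZMod 2, (if a + x ∈ W then chi (qForm k x) else 0)
        = ∑ x : Fin (2 * k) → ZMod 2, (if x ∈ A then chi (qForm k x) else 0) := by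
          apply Finset.sum_congr rfl
          intro x _
          rw [if_congr (hmem x).symm rfl rfl]
      _ = ∑ x ∈ FA, chi (qForm k x) := by
          rw [hFAdef, Finset.sum_filter]
      _ = ∑ x ∈ F0, chi (qForm k x) + ∑ x ∈ F1, chi (qForm k x) :=
          (Finset.sum_filter_add_sum_filter_not FA _ _).symm
      _ = (F0.card : ℤ) - F1.card := by
          have e0 : ∑ x ∈ F0, chi (qForm k x) = (F0.card : ℤ) := by
            rw [Finset.sum_congr rfl (fun x hx => ?_), Finset.sum_const, nsmul_eq_mul, mul_one]
            rw [hF0def, Finset.mem_filter] at hx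
            rw [hx.2, chi_zero]
          have e1 : ∑ x ∈ F1, chi (qForm k x) = -(F1.card : ℤ) := by
            rw [Finset.sum_congr rfl (fun x hx => ?_), Finset.sum_const, nsmul_eq_mul,
              mul_neg, mul_one]
            rw [hF1def, Finset.mem_filter] at hx
            rw [(zmod2_ne_zero _).mp hx.2, chi_one]
          rw [e0, e1]
          ring
  obtain ⟨hlow, hhigh⟩ := key_bounds k d hk2 hkd hd2' a W hW
  rw [hsum] at hlow hhigh
  -- integer bounds
  have hn01 : (F0.card : ℤ) + F1.card = 2 ^ d := by
    have := hcard01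
    rw [hFA] at this
    exact_mod_cast this
  have hd1 : (2:ℤ) ^ d = 2 * 2 ^ (d - 1) := by
    rw [← pow_succ']; congr 1; omega
  have hk1 : (2:ℤ) ^ k = 2 * 2 ^ (k - 1) := by
    rw [← pow_succ']; congr 1; omega
  have hk12 : (2:ℤ) ^ (k - 1) = 2 * 2 ^ (k - 2) := by
    rw [← pow_succ']; congr 1; omega
  have hN0 : (F0.card : ℤ) ≤ 2 ^ (d - 1) + 2 ^ (k - 1) := by linarith
  have hN1 : (F1.card : ℤ) ≤ 2 ^ (d - 1) + 2 ^ (k - 2) := by linarith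
  -- convert to real with integer exponents
  have hzd : (2:ℝ) ^ ((d : ℤ) - 1) = (2:ℝ) ^ (d - 1 : ℕ) := by
    rw [← zpow_natCast]; congr 1; omega
  have hzk1 : (2:ℝ) ^ ((k : ℤ) - 1) = (2:ℝ) ^ (k - 1 : ℕ) := by
    rw [← zpow_natCast]; congr 1; omega
  have hzk2 : (2:ℝ) ^ ((k : ℤ) - 2) = (2:ℝ) ^ (k - 2 : ℕ) := by
    rw [← zpow_natCast]; congr 1; omega
  constructor
  · rw [hR, hzd, hzk1]
    exact_mod_cast hN0
  · rw [hS, hzd, hzk2]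
    exact_mod_cast hN1
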